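/- Gaussian exterior integral in spherical form: Let d ∈ ℕ, d ≥ 1, and σ, R > 0. Then ∫_{{w ∈ ℝ^d : ‖w‖₂ ≥ R}} (2πσ²)^{−d/2} exp(−(‖w‖₂ − R)²/(2σ²)) dw = (R/(σ√2))^{d−1} · (1/Γ(d/2)) · ∑_{i=0}^{d−1} binom(d−1, i) (σ√2/R)^i Γ((i+1)/2), where ‖·‖₂ is the Euclidean norm and Γ is the Gamma function. -/

import Mathlib

open MeasureTheory
open scoped BigOperators

open Real Set in
private lemma gauss_ext_shift (F : ℝ → ℝ) (R : ℝ) :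
    ∫ x in Ioi R, F x = ∫ x in Ioi (0:ℝ), F (x + R) := by
  rw [← integral_indicator measurableSet_Ioi, ← integral_indicator measurableSet_Ioi,
    ← integral_add_right_eq_self (Set.indicator (Ioi R) F) R]
  congr 1; funext x
  by_cases h : 0 < x
  · rw [Set.indicator_of_mem (by simpa using h), Set.indicator_of_mem (by exact h)]
  · rw [Set.indicator_of_notMem (by simpa using h), Set.indicator_of_notMem (by exact h)]

open Real Set in
private lemma gauss_ext_moment (σ : ℝ) (hσ : 0 < σ) (i : ℕ) :
    ∫ s in Ioi (0:ℝ), s ^ i * Real.exp (-s ^ 2 / (2 * σ ^ 2))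
      = (σ * Real.sqrt 2) ^ (i + 1) * (1 / 2) * Real.Gamma (((i:ℝ) + 1) / 2) := by
  set t := σ * Real.sqrt 2 with ht_def
  have ht : 0 < t := by positivity
  have hb : (0:ℝ) < (2 * σ ^ 2)⁻¹ := by positivity
  have hq : (-1:ℝ) < (i:ℝ) := lt_of_lt_of_le (by norm_num) (Nat.cast_nonneg i)
  have key := integral_rpow_mul_exp_neg_mul_rpow (p := 2) (q := (i:ℝ)) (b := (2 * σ ^ 2)⁻¹)
    zero_lt_two hq hb
  rw [show ∫ s in Ioi (0:ℝ), s ^ i * Real.exp (-s ^ 2 / (2 * σ ^ 2))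
      = ∫ x in Ioi (0:ℝ), x ^ (i:ℝ) * Real.exp (-(2 * σ ^ 2)⁻¹ * x ^ (2:ℝ)) from
    setIntegral_congr_fun measurableSet_Ioi fun x hx => by
      have h1 : x ^ ((i:ℕ):ℝ) = x ^ i := Real.rpow_natCast x i
      have h2 : x ^ (2:ℝ) = x ^ 2 := by
        rw [show (2:ℝ) = ((2:ℕ):ℝ) by norm_num, Real.rpow_natCast]
      rw [h1, h2]; ring_nf, key]
  have h2σ : (2 * σ ^ 2)⁻¹ = (t ^ 2)⁻¹ := by
    rw [ht_def, mul_pow, Real.sq_sqrt (by norm_num : (0:ℝ) ≤ 2)]; ring_nf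
  have hpow : ((2 * σ ^ 2)⁻¹ : ℝ) ^ (-((i:ℝ) + 1) / 2) = t ^ (i + 1) := by
    rw [h2σ, ← Real.rpow_neg_one (t ^ 2), ← Real.rpow_natCast t 2,
      ← Real.rpow_mul ht.le, ← Real.rpow_mul ht.le]
    rw [show ((2:ℕ):ℝ) * -1 * (-((i:ℝ) + 1) / 2) = (i:ℝ) + 1 by push_cast; ring]
    rw [show ((i:ℝ) + 1) = (((i+1 : ℕ)):ℝ) by push_cast; ring, Real.rpow_natCast]
  rw [hpow]

open Real Set in
private lemma gauss_ext_momInt (σ : ℝ) (hσ : 0 < σ) (i : ℕ) :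
    IntegrableOn (fun s : ℝ => s ^ i * Real.exp (-s ^ 2 / (2 * σ ^ 2))) (Ioi 0) := by
  have h := integrableOn_rpow_mul_exp_neg_mul_sq (b := (2 * σ ^ 2)⁻¹) (by positivity)
    (s := (i:ℝ)) (lt_of_lt_of_le (by norm_num) (Nat.cast_nonneg i))
  refine h.congr_fun (fun x hx => ?_) measurableSet_Ioi
  beta_reduce; rw [Real.rpow_natCast]; ring_nf

open Real Set in
private lemma gauss_ext_radial (d : ℕ) (hd : 1 ≤ d) (σ R : ℝ) (hσ : 0 < σ) (hR : 0 < R) :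
    ∫ y in Ici R, y ^ (d - 1) * Real.exp (-(y - R) ^ 2 / (2 * σ ^ 2))
      = ∑ i ∈ Finset.range d, ((d - 1).choose i : ℝ) * R ^ (d - 1 - i) *
          ((σ * Real.sqrt 2) ^ (i + 1) * (1 / 2) * Real.Gamma (((i:ℝ) + 1) / 2)) := by
  rw [MeasureTheory.integral_Ici_eq_integral_Ioi,
    gauss_ext_shift (fun y => y ^ (d - 1) * Real.exp (-(y - R) ^ 2 / (2 * σ ^ 2))) R]
  have expand : ∀ x : ℝ,
      (x + R) ^ (d - 1) * Real.exp (-(x + R - R) ^ 2 / (2 * σ ^ 2))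
      = ∑ i ∈ Finset.range d, ((d - 1).choose i : ℝ) * R ^ (d - 1 - i) *
          (x ^ i * Real.exp (-x ^ 2 / (2 * σ ^ 2))) := by
    intro x
    rw [add_pow, show d - 1 + 1 = d from Nat.sub_add_cancel hd, Finset.sum_mul]
    refine Finset.sum_congr rfl fun i hi => ?_
    rw [show x + R - R = x by ring]; ring
  simp_rw [expand]
  rw [MeasureTheory.integral_finset_sum _ (fun i hi =>
    ((gauss_ext_momInt σ hσ i).const_mul _))]
  exact Finset.sum_congr rfl fun i hi => by
    rw [MeasureTheory.integral_const_mul, gauss_ext_moment σ hσ i]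

open Real Set in
private lemma gauss_ext_perterm (d i : ℕ) (hd : 1 ≤ d) (hi : i < d) (σ R : ℝ)
    (hσ : 0 < σ) (hR : 0 < R) :
    (d:ℝ) * (Real.sqrt Real.pi ^ d / Real.Gamma ((d:ℝ)/2 + 1) *
      (((σ * Real.sqrt 2) ^ d * Real.sqrt Real.pi ^ d)⁻¹ *
        (((d-1).choose i : ℝ) * R ^ (d - 1 - i) *
          ((σ * Real.sqrt 2) ^ (i + 1) * (1 / 2) * Real.Gamma (((i:ℝ) + 1) / 2)))))
    = (R / (σ * Real.sqrt 2)) ^ (d - 1) * (1 / Real.Gamma ((d:ℝ) / 2)) *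
        (((d - 1).choose i : ℝ) * (σ * Real.sqrt 2 / R) ^ i *
            Real.Gamma (((i : ℝ) + 1) / 2)) := by
  have ht : (0:ℝ) < σ * Real.sqrt 2 := by positivity
  have hπ : (0:ℝ) < Real.sqrt Real.pi := Real.sqrt_pos.mpr Real.pi_pos
  have hΓh : Real.Gamma ((d:ℝ)/2) ≠ 0 := (Real.Gamma_pos_of_pos (by positivity)).ne'
  have hΓ1 : Real.Gamma ((d:ℝ)/2 + 1) = ((d:ℝ)/2) * Real.Gamma ((d:ℝ)/2) :=
    Real.Gamma_add_one (by positivity)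
  have hd0 : (d:ℝ) ≠ 0 := Nat.cast_ne_zero.mpr (by omega)
  have h1 : R ^ (d - 1 - i) * R ^ i = R ^ (d - 1) := by
    rw [← pow_add]; congr 1; omega
  have hds : d - 1 + 1 = d := by omega
  have h4 : R ^ (d-1-i) * R ^ i * (σ * σ ^ (d-1)) * (Real.sqrt 2 * Real.sqrt 2 ^ (d-1))
      = R ^ (d-1) * σ ^ d * Real.sqrt 2 ^ d := by
    rw [h1, mul_comm σ (σ ^ (d-1)), mul_comm (Real.sqrt 2) (Real.sqrt 2 ^ (d-1)),
      ← pow_succ, ← pow_succ, hds]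
  rw [hΓ1, div_pow, div_pow]
  field_simp
  linear_combination (↑((d-1).choose i) * σ ^ i * Real.sqrt 2 ^ i) * h4

/-- Gaussian exterior integral in spherical form:
`∫_{‖w‖ ≥ R} (2πσ²)^{-d/2} exp(-(‖w‖-R)²/(2σ²)) dw
  = (R/(σ√2))^{d-1} (1/Γ(d/2)) ∑_{i=0}^{d-1} C(d-1,i) (σ√2/R)^i Γ((i+1)/2)`. -/
theorem gaussian_exterior_integral_spherical
    (d : ℕ) (hd : 1 ≤ d) (σ R : ℝ) (hσ : 0 < σ) (hR : 0 < R) :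
    (∫ w in {w : EuclideanSpace ℝ (Fin d) | R ≤ ‖w‖},
        (2 * Real.pi * σ ^ 2) ^ (-(d : ℝ) / 2) *
          Real.exp (-(‖w‖ - R) ^ 2 / (2 * σ ^ 2)))
    = (R / (σ * Real.sqrt 2)) ^ (d - 1) * (1 / Real.Gamma ((d : ℝ) / 2)) *
        ∑ i ∈ Finset.range d,
          ((d - 1).choose i : ℝ) * (σ * Real.sqrt 2 / R) ^ i *
            Real.Gamma (((i : ℝ) + 1) / 2) := by
  classical
  haveI : Nonempty (Fin d) := ⟨⟨0, hd⟩⟩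
  haveI : Nontrivial (EuclideanSpace ℝ (Fin d)) :=
    ⟨⟨EuclideanSpace.single ⟨0, hd⟩ (1:ℝ), 0, by
      intro h
      simpa using congrArg (fun v : EuclideanSpace ℝ (Fin d) => v ⟨0, hd⟩) h⟩⟩
  set C : ℝ := (2 * Real.pi * σ ^ 2) ^ (-(d : ℝ) / 2) with hC
  set g : ℝ → ℝ := Set.indicator (Set.Ici R)
    (fun r => C * Real.exp (-(r - R) ^ 2 / (2 * σ ^ 2))) with hg
  have hset : {w : EuclideanSpace ℝ (Fin d) | R ≤ ‖w‖}
      = (Norm.norm : EuclideanSpace ℝ (Fin d) → ℝ) ⁻¹' (Set.Ici R) := rfl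
  have step1 : (∫ w in {w : EuclideanSpace ℝ (Fin d) | R ≤ ‖w‖},
        C * Real.exp (-(‖w‖ - R) ^ 2 / (2 * σ ^ 2)))
      = ∫ w : EuclideanSpace ℝ (Fin d), g ‖w‖ := by
    rw [hset, ← integral_indicator (measurableSet_Ici.preimage measurable_norm)]
    congr 1
  rw [step1, integral_fun_norm_addHaar volume g]
  have hfr : Module.finrank ℝ (EuclideanSpace ℝ (Fin d)) = d := finrank_euclideanSpace_fin
  rw [hfr]
  have hvol : (volume (Metric.ball (0 : EuclideanSpace ℝ (Fin d)) 1)).toReal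
      = Real.sqrt Real.pi ^ d / Real.Gamma ((d:ℝ) / 2 + 1) := by
    rw [EuclideanSpace.volume_ball]
    simp only [Fintype.card_fin, ENNReal.ofReal_one, one_pow, one_mul]
    rw [ENNReal.toReal_ofReal (by positivity)]
  rw [measureReal_def, hvol]
  have hinner : (∫ y in Set.Ioi (0:ℝ), y ^ (d - 1) • g y)
      = C * ∫ y in Set.Ici R, y ^ (d - 1) * Real.exp (-(y - R) ^ 2 / (2 * σ ^ 2)) := by
    have hpt : ∀ y : ℝ, y ^ (d - 1) • g y
        = Set.indicator (Set.Ici R)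
            (fun y => y ^ (d - 1) * (C * Real.exp (-(y - R) ^ 2 / (2 * σ ^ 2)))) y := by
      intro y
      rw [hg]
      by_cases h : y ∈ Set.Ici R
      · rw [Set.indicator_of_mem h, Set.indicator_of_mem h, smul_eq_mul]
      · rw [Set.indicator_of_notMem h, Set.indicator_of_notMem h, smul_zero]
    simp_rw [hpt]
    have hIC : Set.Ioi (0:ℝ) ∩ Set.Ici R = Set.Ici R :=
      Set.inter_eq_self_of_subset_right fun y hy => lt_of_lt_of_le hR hy
    rw [setIntegral_indicator measurableSet_Ici, hIC, ← integral_const_mul]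
    congr 1; funext y; ring
  rw [hinner, gauss_ext_radial d hd σ R hσ hR]
  have hCval : C = ((σ * Real.sqrt 2) ^ d * Real.sqrt Real.pi ^ d)⁻¹ := by
    have hbase : 2 * Real.pi * σ ^ 2 = ((σ * Real.sqrt 2) * Real.sqrt Real.pi) ^ 2 := by
      rw [mul_pow, mul_pow, Real.sq_sqrt Real.pi_pos.le,
        Real.sq_sqrt (by norm_num : (0:ℝ) ≤ 2)]
      ring
    have hb : (0:ℝ) < (σ * Real.sqrt 2) * Real.sqrt Real.pi := by
      have : (0:ℝ) < Real.sqrt Real.pi := Real.sqrt_pos.mpr Real.pi_pos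
      positivity
    rw [hC, hbase, ← Real.rpow_natCast ((σ * Real.sqrt 2) * Real.sqrt Real.pi) 2,
      ← Real.rpow_mul hb.le,
      show ((2:ℕ):ℝ) * (-(d:ℝ) / 2) = -(d:ℝ) by push_cast; ring,
      Real.rpow_neg hb.le, Real.rpow_natCast, mul_pow]
  rw [hCval, nsmul_eq_mul, smul_eq_mul]
  simp_rw [Finset.mul_sum]
  exact Finset.sum_congr rfl fun i hi =>
    gauss_ext_perterm d i hd (Finset.mem_range.mp hi) σ R hσ hR
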